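/- Let p ≥ 2 and let Λ = (λ_n) be a sequence of nonnegative reals such that the sequence q_n = p λ_n + 1 is r-lacunary (q_{n+1} ≥ r q_n, r > 1). Then for every finitely supported sequence b, ‖Σ_n b_n t^{λ_n}‖_{L^p([0,1])} ≤ (1 + 2 p^{1/(p-1)}/(r^{1/(p(p-1))} − 1))^{1/p'} (Σ_n |b_n|^p/(p λ_n + 1))^{1/p}, where p' = p/(p−1). -/

import Mathlib

open MeasureTheory Set Real
open scoped ENNReal NNReal

-- basic integral
lemma integral_abs_rpow_Icc {a : ℝ} (ha : 0 ≤ a) :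
    ∫ t in Icc (0:ℝ) 1, |t| ^ a = 1 / (a + 1) := by
  have h1 : ∀ t ∈ Icc (0:ℝ) 1, |t| ^ a = t ^ a := by
    intro t ht; rw [abs_of_nonneg ht.1]
  rw [setIntegral_congr_fun measurableSet_Icc h1]
  rw [MeasureTheory.integral_Icc_eq_integral_Ioc,
    ← intervalIntegral.integral_of_le (by norm_num : (0:ℝ) ≤ 1),
    integral_rpow (Or.inl (by linarith))]
  rw [Real.one_rpow, Real.zero_rpow (by linarith : a + 1 ≠ 0)]
  ring

lemma eLpNorm_ofReal_eq {q : ℝ} (hq : 1 ≤ q) (f : ℝ → ℝ) (hf : Continuous f)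
    (h0 : ∀ t, 0 ≤ f t) :
    eLpNorm f (ENNReal.ofReal q) (volume.restrict (Icc (0:ℝ) 1))
      = ENNReal.ofReal ((∫ t in Icc (0:ℝ) 1, f t ^ q) ^ (1/q)) := by
  have hq0 : 0 < q := lt_of_lt_of_le one_pos hq
  have hP0 : ENNReal.ofReal q ≠ 0 := by
    simp [ENNReal.ofReal_eq_zero, not_le, hq0]
  have hPt : ENNReal.ofReal q ≠ ⊤ := ENNReal.ofReal_ne_top
  rw [eLpNorm_eq_lintegral_rpow_enorm_toReal hP0 hPt]
  rw [ENNReal.toReal_ofReal hq0.le]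
  have hfq : Continuous (fun t => f t ^ q) :=
    (Real.continuous_rpow_const hq0.le).comp hf
  have hint : Integrable (fun t => f t ^ q) (volume.restrict (Icc (0:ℝ) 1)) :=
    hfq.integrableOn_Icc
  have key : ∫⁻ t, ‖f t‖ₑ ^ q ∂(volume.restrict (Icc (0:ℝ) 1))
      = ENNReal.ofReal (∫ t in Icc (0:ℝ) 1, f t ^ q) := by
    rw [MeasureTheory.ofReal_integral_eq_lintegral_ofReal hint
      (Filter.Eventually.of_forall fun t => Real.rpow_nonneg (h0 t) q)]
    apply lintegral_congr
    intro t
    rw [← ENNReal.ofReal_rpow_of_nonneg (h0 t) hq0.le]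
    congr 1
    rw [Real.enorm_eq_ofReal (h0 t)]
  rw [key, ← ENNReal.ofReal_rpow_of_nonneg (integral_nonneg fun t => Real.rpow_nonneg (h0 t) q) (by positivity)]
lemma minkowski_sum {q : ℝ} (hq : 1 ≤ q) (s : Finset ℕ) (G : ℕ → ℝ → ℝ)
    (hGc : ∀ m, Continuous (G m)) (hG0 : ∀ m t, 0 ≤ G m t) :
    (∫ t in Icc (0:ℝ) 1, (∑ m ∈ s, G m t) ^ q) ^ (1/q)
      ≤ ∑ m ∈ s, (∫ t in Icc (0:ℝ) 1, (G m t) ^ q) ^ (1/q) := by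
  have hq0 : 0 < q := lt_of_lt_of_le one_pos hq
  have hSc : Continuous (fun t => ∑ m ∈ s, G m t) := by
    apply continuous_finset_sum; intro m _; exact hGc m
  have hS0 : ∀ t, 0 ≤ ∑ m ∈ s, G m t := fun t => Finset.sum_nonneg fun m _ => hG0 m t
  have h1 : eLpNorm (fun t => ∑ m ∈ s, G m t) (ENNReal.ofReal q) (volume.restrict (Icc (0:ℝ) 1))
      ≤ ∑ m ∈ s, eLpNorm (G m) (ENNReal.ofReal q) (volume.restrict (Icc (0:ℝ) 1)) := by
    have := eLpNorm_sum_le (μ := volume.restrict (Icc (0:ℝ) 1)) (f := G) (s := s)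
      (fun m _ => (hGc m).aestronglyMeasurable) (ENNReal.one_le_ofReal.mpr hq)
    convert this using 2
    ext t
    simp
  rw [eLpNorm_ofReal_eq hq _ hSc hS0] at h1
  have h2 : ∀ m ∈ s, eLpNorm (G m) (ENNReal.ofReal q) (volume.restrict (Icc (0:ℝ) 1))
      = ENNReal.ofReal ((∫ t in Icc (0:ℝ) 1, (G m t) ^ q) ^ (1/q)) := fun m _ =>
    eLpNorm_ofReal_eq hq _ (hGc m) (hG0 m)
  rw [Finset.sum_congr rfl h2, ← ENNReal.ofReal_sum_of_nonneg (fun m _ => Real.rpow_nonneg (integral_nonneg fun t => Real.rpow_nonneg (hG0 m t) q) _)] at h1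
  exact (ENNReal.ofReal_le_ofReal_iff (Finset.sum_nonneg fun m _ => Real.rpow_nonneg (integral_nonneg fun t => Real.rpow_nonneg (hG0 m t) q) _)).mp h1

lemma Kbound_diag {p Q : ℝ} (hp : 2 ≤ p) (hQ : 1 ≤ Q) :
    p * (Q ^ ((p-1)/p) * Q ^ (1/p)) / ((p-1) * Q + Q) = 1 := by
  have hp0 : 0 < p := by linarith
  have hQ0 : 0 < Q := by linarith
  have h1 : Q ^ ((p-1)/p) * Q ^ (1/p) = Q := by
    rw [← Real.rpow_add hQ0]
    have : (p-1)/p + 1/p = 1 := by field_simp; ring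
    rw [this, Real.rpow_one]
  have h2 : (p-1) * Q + Q = p * Q := by ring
  rw [h1, h2]
  field_simp

lemma Kbound_offdiag {p A B rk : ℝ} (hp : 2 ≤ p) (hA : 1 ≤ A) (hB : 1 ≤ B) (hrk : 1 ≤ rk)
    (h : A * rk ≤ B ∨ B * rk ≤ A) :
    p * (A ^ ((p-1)/p) * B ^ (1/p)) / ((p-1) * A + B) ≤ p * (rk ^ (1/p))⁻¹ := by
  have hp0 : 0 < p := by linarith
  have hA0 : 0 < A := by linarith
  have hB0 : 0 < B := by linarith
  have hrk0 : 0 < rk := by linarith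
  have hAe : 0 < A ^ ((p-1)/p) := Real.rpow_pos_of_pos hA0 _
  have hBe : 0 < B ^ (1/p) := Real.rpow_pos_of_pos hB0 _
  have hnum : 0 ≤ p * (A ^ ((p-1)/p) * B ^ (1/p)) := by positivity
  have hfin : (rk⁻¹) ^ (1/p) = (rk ^ (1/p))⁻¹ := Real.inv_rpow hrk0.le _
  rcases h with h1 | h1
  · -- m < n : A * rk ≤ B
    have hratio : A / B ≤ rk⁻¹ := by
      rw [div_le_iff₀ hB0, inv_mul_eq_div, le_div_iff₀ hrk0]
      linarith [h1]
    have step1 : p * (A ^ ((p-1)/p) * B ^ (1/p)) / ((p-1) * A + B)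
        ≤ p * (A ^ ((p-1)/p) * B ^ (1/p)) / B := by
      apply div_le_div_of_nonneg_left hnum hB0
      nlinarith
    have step2 : p * (A ^ ((p-1)/p) * B ^ (1/p)) / B = p * (A/B) ^ ((p-1)/p) := by
      rw [Real.div_rpow hA0.le hB0.le, mul_div_assoc]
      congr 1
      rw [div_eq_div_iff hB0.ne' (Real.rpow_pos_of_pos hB0 ((p-1)/p)).ne', mul_assoc, ← Real.rpow_add hB0]
      have : 1/p + (p-1)/p = 1 := by field_simp; ring
      rw [this, Real.rpow_one]
    have step3 : (A/B) ^ ((p-1)/p) ≤ (A/B) ^ (1/p) :=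
      Real.rpow_le_rpow_of_exponent_ge (by positivity)
        (by rw [div_le_one hB0]; nlinarith)
        (by rw [div_le_div_iff₀ hp0 hp0]; nlinarith)
    have step4 : (A/B) ^ (1/p) ≤ (rk⁻¹) ^ (1/p) :=
      Real.rpow_le_rpow (by positivity) hratio (by positivity)
    calc p * (A ^ ((p-1)/p) * B ^ (1/p)) / ((p-1) * A + B)
        ≤ p * (A ^ ((p-1)/p) * B ^ (1/p)) / B := step1
      _ = p * (A/B) ^ ((p-1)/p) := step2
      _ ≤ p * (A/B) ^ (1/p) := by nlinarith
      _ ≤ p * (rk⁻¹) ^ (1/p) := by nlinarith [Real.rpow_nonneg (show (0:ℝ) ≤ A/B by positivity) (1/p)]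
      _ = p * (rk ^ (1/p))⁻¹ := by rw [hfin]
  · -- m > n : B * rk ≤ A
    have hratio : B / A ≤ rk⁻¹ := by
      rw [div_le_iff₀ hA0, inv_mul_eq_div, le_div_iff₀ hrk0]
      linarith [h1]
    have step1 : p * (A ^ ((p-1)/p) * B ^ (1/p)) / ((p-1) * A + B)
        ≤ p * (A ^ ((p-1)/p) * B ^ (1/p)) / A := by
      apply div_le_div_of_nonneg_left hnum hA0
      nlinarith
    have step2 : p * (A ^ ((p-1)/p) * B ^ (1/p)) / A = p * (B/A) ^ (1/p) := by
      rw [Real.div_rpow hB0.le hA0.le, mul_div_assoc]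
      congr 1
      rw [div_eq_div_iff hA0.ne' (Real.rpow_pos_of_pos hA0 (1/p)).ne', mul_comm (A ^ ((p-1)/p)) (B ^ (1/p)), mul_assoc, ← Real.rpow_add hA0]
      have : (p-1)/p + 1/p = 1 := by field_simp; ring
      rw [this, Real.rpow_one]
    have step4 : (B/A) ^ (1/p) ≤ (rk⁻¹) ^ (1/p) :=
      Real.rpow_le_rpow (by positivity) hratio (by positivity)
    calc p * (A ^ ((p-1)/p) * B ^ (1/p)) / ((p-1) * A + B)
        ≤ p * (A ^ ((p-1)/p) * B ^ (1/p)) / A := step1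
      _ = p * (B/A) ^ (1/p) := step2
      _ ≤ p * (rk⁻¹) ^ (1/p) := by nlinarith [Real.rpow_nonneg (show (0:ℝ) ≤ B/A by positivity) (1/p)]
      _ = p * (rk ^ (1/p))⁻¹ := by rw [hfin]

lemma sum_y_pow_le {y : ℝ} (h0 : 0 ≤ y) (h1 : y < 1) (t : Finset ℕ) (hmem : ∀ k ∈ t, 1 ≤ k) :
    ∑ k ∈ t, y ^ k ≤ y / (1 - y) := by
  have hy1 : (0:ℝ) < 1 - y := by linarith
  set N := t.sup id with hN
  have hsub : t ⊆ Finset.image (· + 1) (Finset.range N) := by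
    intro k hk
    have h1k : 1 ≤ k := hmem k hk
    have hkN : k ≤ N := Finset.le_sup (f := id) hk
    simp only [Finset.mem_image, Finset.mem_range]
    exact ⟨k - 1, by omega, by omega⟩
  calc ∑ k ∈ t, y ^ k ≤ ∑ k ∈ Finset.image (· + 1) (Finset.range N), y ^ k :=
        Finset.sum_le_sum_of_subset_of_nonneg hsub (fun k _ _ => pow_nonneg h0 k)
    _ = ∑ k ∈ Finset.range N, y ^ (k + 1) := by
        rw [Finset.sum_image (by intro a _ b _ h; simp only at h; omega)]
    _ = y * ∑ k ∈ Finset.range N, y ^ k := by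
        rw [Finset.mul_sum]; exact Finset.sum_congr rfl fun k _ => by ring
    _ ≤ y * (1 / (1 - y)) := by
        apply mul_le_mul_of_nonneg_left _ h0
        have hgeq := geom_sum_eq (by linarith : y ≠ 1) N
        rw [hgeq, ← neg_div_neg_eq]
        have : -(y ^ N - 1) = 1 - y ^ N := by ring
        have h2 : -(y - 1) = 1 - y := by ring
        rw [this, h2]
        gcongr
        nlinarith [pow_nonneg h0 N]
    _ = y / (1 - y) := by ring

theorem stmt5 (p p' r : ℝ) (hp : 2 ≤ p) (hp' : p' = p / (p - 1)) (hr : 1 < r)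
    (lam : ℕ → ℝ) (hlam0 : ∀ n, 0 ≤ lam n)
    (hlac : ∀ n, r * (p * lam n + 1) ≤ p * lam (n+1) + 1) :
    ∀ b : ℕ →₀ ℝ,
      (∫ t in Set.Icc (0:ℝ) 1, |∑ n ∈ b.support, b n * t ^ lam n| ^ p) ^ (1/p)
        ≤ (1 + 2 * p ^ (1/(p-1)) / (r ^ (1/(p*(p-1))) - 1)) ^ (1/p')
            * (∑ n ∈ b.support, |b n| ^ p / (p * lam n + 1)) ^ (1/p) := by
  intro b
  classical
  have hp0 : (0:ℝ) < p := by linarith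
  have hp1 : (1:ℝ) < p := by linarith
  have hq1 : (1:ℝ) ≤ p - 1 := by linarith
  have hq0 : (0:ℝ) < p - 1 := by linarith
  have hr0 : (0:ℝ) < r := by linarith
  set s : Finset ℕ := b.support with hs
  set α : ℝ := 1/(p-1) with hα
  have hα0 : 0 < α := by positivity
  set Q : ℕ → ℝ := fun n => p * lam n + 1 with hQdef
  have hQ1 : ∀ n, 1 ≤ Q n := fun n => by
    have := hlam0 n; simp only [hQdef]; nlinarith
  have hQ0 : ∀ n, 0 < Q n := fun n => lt_of_lt_of_le one_pos (hQ1 n)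
  -- geometric growth of Q
  have hgrow0 : ∀ n k : ℕ, Q n * r ^ k ≤ Q (n + k) := by
    intro n k
    induction k with
    | zero => simp
    | succ k ih =>
        calc Q n * r ^ (k+1) = (Q n * r ^ k) * r := by ring
          _ ≤ Q (n+k) * r := by
              apply mul_le_mul_of_nonneg_right ih hr0.le
          _ ≤ Q (n+k+1) := by
              have := hlac (n+k); simp only [hQdef]; linarith
  have hgrow : ∀ m n : ℕ, m < n → Q m * r ^ (n - m) ≤ Q n := by
    intro m n h
    have := hgrow0 m (n - m)
    rwa [Nat.add_sub_cancel' h.le] at this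
  -- rho and y
  set ρ : ℝ := r ^ (1/(p*(p-1))) with hρdef
  have hρ1 : 1 < ρ := by
    rw [hρdef]
    exact Real.one_lt_rpow_iff_of_pos hr0 |>.mpr (Or.inl ⟨hr, by positivity⟩)

  have hρ0 : 0 < ρ := by linarith
  set y : ℝ := ρ⁻¹ with hydef
  have hy0 : 0 < y := by positivity
  have hy1 : y < 1 := by
    rw [hydef, inv_lt_one_iff₀]; right; exact hρ1
  -- functions
  set g : ℕ → ℝ → ℝ := fun n t => Q n ^ (1/p) * |t| ^ lam n with hgdef
  have hgc : ∀ n, Continuous (g n) := fun n =>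
    continuous_const.mul ((Real.continuous_rpow_const (hlam0 n)).comp continuous_abs)
  have hg0 : ∀ n t, 0 ≤ g n t := fun n t =>
    mul_nonneg (Real.rpow_nonneg (hQ0 n).le _) (Real.rpow_nonneg (abs_nonneg t) _)
  -- rpow cancellation helpers
  have hcan : ∀ (x e : ℝ), 0 ≤ x → e ≠ 0 → (x ^ e) ^ (1/e) = x := by
    intro x e hx he
    rw [← Real.rpow_mul hx, mul_one_div, div_self he, Real.rpow_one]
  have hcan' : ∀ (x e : ℝ), 0 ≤ x → e ≠ 0 → (x ^ (1/e)) ^ e = x := by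
    intro x e hx he
    rw [← Real.rpow_mul hx, one_div, inv_mul_cancel₀ he, Real.rpow_one]
  -- K and its value
  set K : ℕ → ℕ → ℝ := fun m n => ∫ t in Icc (0:ℝ) 1, (g m t) ^ (p-1) * g n t with hKdef
  have hKval : ∀ m n, K m n = p * (Q m ^ ((p-1)/p) * Q n ^ (1/p)) / ((p-1) * Q m + Q n) := by
    intro m n
    have hpt : ∀ t : ℝ, (g m t) ^ (p-1) * g n t
        = (Q m ^ ((p-1)/p) * Q n ^ (1/p)) * |t| ^ ((p-1) * lam m + lam n) := by
      intro t
      simp only [hgdef]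
      rw [Real.mul_rpow (Real.rpow_nonneg (hQ0 m).le _) (Real.rpow_nonneg (abs_nonneg t) _)]
      rw [← Real.rpow_mul (hQ0 m).le, ← Real.rpow_mul (abs_nonneg t)]
      rw [Real.rpow_add_of_nonneg (abs_nonneg t) (by nlinarith [hlam0 m]) (hlam0 n)]
      have he : 1/p * (p-1) = (p-1)/p := by ring
      have he2 : lam m * (p-1) = (p-1) * lam m := by ring
      rw [he, he2]
      ring
    have hconst : K m n = (Q m ^ ((p-1)/p) * Q n ^ (1/p)) * ∫ t in Icc (0:ℝ) 1, |t| ^ ((p-1) * lam m + lam n) := by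
      rw [hKdef]
      simp only [hpt]
      exact MeasureTheory.integral_const_mul _ _
    rw [hconst, integral_abs_rpow_Icc (by nlinarith [hlam0 m, hlam0 n])]
    have hE : (p-1) * lam m + lam n + 1 = ((p-1) * Q m + Q n) / p := by
      simp only [hQdef]; field_simp; ring
    rw [hE]
    have hden : 0 < (p-1) * Q m + Q n := by nlinarith [hQ0 m, hQ0 n]
    field_simp
  have hK0 : ∀ m n, 0 ≤ K m n := by
    intro m n
    rw [hKval m n]
    have hden : 0 < (p-1) * Q m + Q n := by nlinarith [hQ0 m, hQ0 n]
    apply div_nonneg _ hden.le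
    have := hQ0 m; have := hQ0 n
    positivity
  -- off-diagonal bound, in rpow-alpha form
  have hconv : ∀ k : ℕ, (p * ((r ^ k) ^ (1/p))⁻¹) ^ α = p ^ α * y ^ k := by
    intro k
    rw [Real.mul_rpow hp0.le (by positivity)]
    congr 1
    have h1 : ((r ^ k) ^ (1/p)) ^ α = ρ ^ k := by
      have h2 : ρ ^ k = r ^ ((1/(p*(p-1))) * (k:ℕ)) := by
        rw [hρdef, ← Real.rpow_natCast (r ^ (1/(p*(p-1)))) k, ← Real.rpow_mul hr0.le]
      rw [h2, ← Real.rpow_natCast r k, ← Real.rpow_mul hr0.le, ← Real.rpow_mul hr0.le]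
      congr 1
      rw [hα]
      field_simp
    rw [Real.inv_rpow (by positivity : (0:ℝ) ≤ (r ^ k) ^ (1/p)), h1, hydef, inv_pow]
  -- C and the K-sum bound
  set C : ℝ := 1 + 2 * p ^ α / (ρ - 1) with hCdef
  have hρm : 0 < ρ - 1 := by linarith
  have hC0 : 0 < C := by
    have h1 : 0 ≤ 2 * p ^ α / (ρ - 1) := by
      apply div_nonneg _ hρm.le; positivity
    rw [hCdef]; linarith
  have hyy : y / (1 - y) = 1 / (ρ - 1) := by
    rw [hydef]
    rw [div_eq_div_iff (by linarith : (0:ℝ) < 1 - y).ne' hρm.ne', hydef]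
    field_simp
  have hKsum : ∀ n ∈ s, ∑ m ∈ s, (K m n) ^ α ≤ C := by
    intro n hn
    have hdiag : (K n n) ^ α = 1 := by
      rw [hKval n n, Kbound_diag hp (hQ1 n), Real.one_rpow]
    have hoff : ∀ m ∈ s.erase n, (K m n) ^ α ≤ p ^ α * y ^ (if m < n then n - m else m - n) := by
      intro m hm
      have hmn : m ≠ n := Finset.ne_of_mem_erase hm
      by_cases hlt : m < n
      · simp only [hlt, if_true]
        have hb : K m n ≤ p * ((r ^ (n - m)) ^ (1/p))⁻¹ := by
          rw [hKval m n]
          exact Kbound_offdiag hp (hQ1 m) (hQ1 n) (one_le_pow₀ hr.le) (Or.inl (hgrow m n hlt))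
        calc (K m n) ^ α ≤ (p * ((r ^ (n - m)) ^ (1/p))⁻¹) ^ α :=
              Real.rpow_le_rpow (hK0 m n) hb hα0.le
          _ = p ^ α * y ^ (n - m) := hconv _
      · have hgt : n < m := by omega
        simp only [hlt, if_false]
        have hb : K m n ≤ p * ((r ^ (m - n)) ^ (1/p))⁻¹ := by
          rw [hKval m n]
          exact Kbound_offdiag hp (hQ1 m) (hQ1 n) (one_le_pow₀ hr.le) (Or.inr (hgrow n m hgt))
        calc (K m n) ^ α ≤ (p * ((r ^ (m - n)) ^ (1/p))⁻¹) ^ α :=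
              Real.rpow_le_rpow (hK0 m n) hb hα0.le
          _ = p ^ α * y ^ (m - n) := hconv _
    have key1 : ∀ (t1 : Finset ℕ), (∀ m ∈ t1, m < n) → ∑ m ∈ t1, y ^ (n - m) ≤ y / (1-y) := by
      intro t1 ht1
      have hinj : ∀ a ∈ t1, ∀ c ∈ t1, n - a = n - c → a = c := by
        intro a ha c hc h
        have := ht1 a ha; have := ht1 c hc; omega
      rw [← Finset.sum_image (f := fun k => y ^ k) (g := fun m => n - m) hinj]
      apply sum_y_pow_le hy0.le hy1
      intro k hk
      obtain ⟨m, hm, rfl⟩ := Finset.mem_image.mp hk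
      have := ht1 m hm; omega
    have key2 : ∀ (t2 : Finset ℕ), (∀ m ∈ t2, n < m) → ∑ m ∈ t2, y ^ (m - n) ≤ y / (1-y) := by
      intro t2 ht2
      have hinj : ∀ a ∈ t2, ∀ c ∈ t2, a - n = c - n → a = c := by
        intro a ha c hc h
        have := ht2 a ha; have := ht2 c hc; omega
      rw [← Finset.sum_image (f := fun k => y ^ k) (g := fun m => m - n) hinj]
      apply sum_y_pow_le hy0.le hy1
      intro k hk
      obtain ⟨m, hm, rfl⟩ := Finset.mem_image.mp hk
      have := ht2 m hm; omega
    have hsplit : ∑ m ∈ s.erase n, (K m n) ^ α ≤ p ^ α * (2 * (y / (1 - y))) := by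
      calc ∑ m ∈ s.erase n, (K m n) ^ α
          ≤ ∑ m ∈ s.erase n, p ^ α * y ^ (if m < n then n - m else m - n) :=
            Finset.sum_le_sum hoff
        _ = p ^ α * ∑ m ∈ s.erase n, y ^ (if m < n then n - m else m - n) := by
            rw [Finset.mul_sum]
        _ ≤ p ^ α * (2 * (y / (1 - y))) := by
            apply mul_le_mul_of_nonneg_left _ (Real.rpow_nonneg hp0.le α)
            rw [← Finset.sum_filter_add_sum_filter_not (s.erase n) (· < n)]
            have e1 : ∑ m ∈ (s.erase n).filter (· < n), y ^ (if m < n then n - m else m - n)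
                = ∑ m ∈ (s.erase n).filter (· < n), y ^ (n - m) := by
              apply Finset.sum_congr rfl
              intro m hm
              have := (Finset.mem_filter.mp hm).2
              simp [this]
            have e2 : ∑ m ∈ (s.erase n).filter (fun m => ¬ m < n), y ^ (if m < n then n - m else m - n)
                = ∑ m ∈ (s.erase n).filter (fun m => ¬ m < n), y ^ (m - n) := by
              apply Finset.sum_congr rfl
              intro m hm
              have := (Finset.mem_filter.mp hm).2
              simp [this]
            rw [e1, e2]
            have b1 := key1 ((s.erase n).filter (· < n)) (fun m hm => (Finset.mem_filter.mp hm).2)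
            have b2 := key2 ((s.erase n).filter (fun m => ¬ m < n)) (by
              intro m hm
              have h1 := (Finset.mem_filter.mp hm).2
              have h2 : m ≠ n := Finset.ne_of_mem_erase (Finset.mem_filter.mp hm).1
              omega)
            linarith
    rw [← Finset.sum_erase_add s _ hn, hdiag, hCdef]
    have : p ^ α * (2 * (y/(1-y))) = 2 * p ^ α / (ρ - 1) := by
      rw [hyy]; ring
    linarith [hsplit, this ▸ hsplit]
  -- R and its bound
  set R : ℕ → ℝ := fun n => ∫ t in Icc (0:ℝ) 1, g n t * (∑ m ∈ s, g m t) ^ (p-1) with hRdef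
  have hsum0 : ∀ t, 0 ≤ ∑ m ∈ s, g m t := fun t => Finset.sum_nonneg fun m _ => hg0 m t
  have hR0 : ∀ n, 0 ≤ R n := by
    intro n
    apply MeasureTheory.setIntegral_nonneg measurableSet_Icc
    intro t _
    exact mul_nonneg (hg0 n t) (Real.rpow_nonneg (hsum0 t) _)
  have hαq : α * (p-1) = 1 := by rw [hα]; field_simp
  have hRbound : ∀ n ∈ s, R n ≤ C ^ (p-1) := by
    intro n hn
    set G : ℕ → ℝ → ℝ := fun m t => g m t * (g n t) ^ α with hGdef
    have hGc : ∀ m, Continuous (G m) := fun m =>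
      (hgc m).mul ((Real.continuous_rpow_const hα0.le).comp (hgc n))
    have hG0 : ∀ m t, 0 ≤ G m t := fun m t =>
      mul_nonneg (hg0 m t) (Real.rpow_nonneg (hg0 n t) α)
    have hGpt : ∀ t, (∑ m ∈ s, G m t) ^ (p-1) = g n t * (∑ m ∈ s, g m t) ^ (p-1) := by
      intro t
      have e0 : ∑ m ∈ s, G m t = (∑ m ∈ s, g m t) * (g n t) ^ α := by
        rw [Finset.sum_mul]
      rw [e0, Real.mul_rpow (hsum0 t) (Real.rpow_nonneg (hg0 n t) α),
        ← Real.rpow_mul (hg0 n t), hαq, Real.rpow_one, mul_comm]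
    have hRG : R n = ∫ t in Icc (0:ℝ) 1, (∑ m ∈ s, G m t) ^ (p-1) := by
      rw [hRdef]
      simp only [hGpt]
    have hmink := minkowski_sum hq1 s G hGc hG0
    have hGK : ∀ m, (∫ t in Icc (0:ℝ) 1, (G m t) ^ (p-1)) = K m n := by
      intro m
      have hpt2 : ∀ t, (G m t) ^ (p-1) = (g m t) ^ (p-1) * g n t := by
        intro t
        rw [hGdef]
        simp only []
        rw [Real.mul_rpow (hg0 m t) (Real.rpow_nonneg (hg0 n t) α),
          ← Real.rpow_mul (hg0 n t), hαq, Real.rpow_one]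
      rw [hKdef]
      simp only [hpt2]
    simp only [hGK] at hmink
    rw [← hRG] at hmink
    have hstep : (R n) ^ (1/(p-1)) ≤ C := by
      apply le_trans hmink
      have := hKsum n hn
      rw [hα] at this
      exact this
    calc R n = ((R n) ^ (1/(p-1))) ^ (p-1) := (hcan' _ _ (hR0 n) hq0.ne').symm
      _ ≤ C ^ (p-1) := Real.rpow_le_rpow (Real.rpow_nonneg (hR0 n) _) hstep hq0.le
  -- pointwise Hoelder
  set d : ℕ → ℝ := fun n => |b n| ^ p / Q n with hddef
  have hd0 : ∀ n, 0 ≤ d n := fun n => div_nonneg (Real.rpow_nonneg (abs_nonneg _) p) (hQ0 n).le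
  have hpq : Real.HolderConjugate p (p/(p-1)) := Real.HolderConjugate.conjExponent hp1
  have e4 : ∀ x : ℝ, 0 ≤ x → (x ^ ((p-1)/p)) ^ (p/(p-1)) = x := by
    intro x hx
    rw [← Real.rpow_mul hx]
    have : (p-1)/p * (p/(p-1)) = 1 := by field_simp
    rw [this, Real.rpow_one]
  have holder : ∀ t ∈ Icc (0:ℝ) 1,
      |∑ n ∈ s, b n * t ^ lam n| ^ p ≤ (∑ n ∈ s, d n * g n t) * (∑ n ∈ s, g n t) ^ (p-1) := by
    intro t _
    have habs : |∑ n ∈ s, b n * t ^ lam n| ≤ ∑ n ∈ s, |b n| * |t| ^ lam n := by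
      refine (Finset.abs_sum_le_sum_abs _ _).trans ?_
      apply Finset.sum_le_sum
      intro n _
      rw [abs_mul]
      exact mul_le_mul_of_nonneg_left (Real.abs_rpow_le_abs_rpow _ _) (abs_nonneg _)
    have hprod : ∀ n, |b n| * |t| ^ lam n = (d n * g n t) ^ (1/p) * (g n t) ^ ((p-1)/p) := by
      intro n
      have e1 : (d n * g n t) ^ (1/p) = d n ^ (1/p) * (g n t) ^ (1/p) :=
        Real.mul_rpow (hd0 n) (hg0 n t)
      have e2 : (g n t) ^ (1/p) * (g n t) ^ ((p-1)/p) = g n t := by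
        rw [← Real.rpow_add_of_nonneg (hg0 n t) (by positivity) (by positivity)]
        have : 1/p + (p-1)/p = 1 := by field_simp; ring
        rw [this, Real.rpow_one]
      rw [e1, mul_assoc, e2]
      have e3 : d n ^ (1/p) = |b n| * (Q n ^ (1/p))⁻¹ := by
        rw [hddef]
        simp only []
        rw [Real.div_rpow (Real.rpow_nonneg (abs_nonneg _) p) (hQ0 n).le,
          hcan _ _ (abs_nonneg _) hp0.ne', div_eq_mul_inv]
      rw [e3, hgdef]
      simp only []
      have hQp : (0:ℝ) < Q n ^ (1/p) := Real.rpow_pos_of_pos (hQ0 n) _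
      field_simp
    have hold : ∑ n ∈ s, |b n| * |t| ^ lam n
        ≤ (∑ n ∈ s, d n * g n t) ^ (1/p) * (∑ n ∈ s, g n t) ^ (1/(p/(p-1))) := by
      have hh := Real.inner_le_Lp_mul_Lq_of_nonneg (s := s) hpq
        (f := fun n => (d n * g n t) ^ (1/p)) (g := fun n => (g n t) ^ ((p-1)/p))
        (fun n _ => Real.rpow_nonneg (mul_nonneg (hd0 n) (hg0 n t)) _)
        (fun n _ => Real.rpow_nonneg (hg0 n t) _)
      have r1 : ∑ n ∈ s, ((d n * g n t) ^ (1/p)) ^ p = ∑ n ∈ s, d n * g n t :=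
        Finset.sum_congr rfl fun n _ => hcan' _ p (mul_nonneg (hd0 n) (hg0 n t)) hp0.ne'
      have r2 : ∑ n ∈ s, ((g n t) ^ ((p-1)/p)) ^ (p/(p-1)) = ∑ n ∈ s, g n t :=
        Finset.sum_congr rfl fun n _ => e4 _ (hg0 n t)
      rw [r1, r2] at hh
      calc ∑ n ∈ s, |b n| * |t| ^ lam n
          = ∑ n ∈ s, (d n * g n t) ^ (1/p) * (g n t) ^ ((p-1)/p) :=
            Finset.sum_congr rfl fun n _ => hprod n
        _ ≤ _ := hh
    have hdg0 : 0 ≤ ∑ n ∈ s, d n * g n t :=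
      Finset.sum_nonneg fun n _ => mul_nonneg (hd0 n) (hg0 n t)
    have hraise : |∑ n ∈ s, b n * t ^ lam n| ^ p
        ≤ ((∑ n ∈ s, d n * g n t) ^ (1/p) * (∑ n ∈ s, g n t) ^ (1/(p/(p-1)))) ^ p :=
      Real.rpow_le_rpow (abs_nonneg _) (habs.trans hold) hp0.le
    have hrhs : ((∑ n ∈ s, d n * g n t) ^ (1/p) * (∑ n ∈ s, g n t) ^ (1/(p/(p-1)))) ^ p
        = (∑ n ∈ s, d n * g n t) * (∑ n ∈ s, g n t) ^ (p-1) := by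
      rw [Real.mul_rpow (Real.rpow_nonneg hdg0 _) (Real.rpow_nonneg (hsum0 t) _),
        hcan' _ p hdg0 hp0.ne', ← Real.rpow_mul (hsum0 t)]
      congr 1
      rw [one_div_div]
      field_simp
    rw [hrhs] at hraise
    exact hraise
  -- integrate
  have hfc : Continuous (fun t => |∑ n ∈ s, b n * t ^ lam n| ^ p) := by
    apply (Real.continuous_rpow_const hp0.le).comp
    apply Continuous.abs
    exact continuous_finset_sum _ fun n _ =>
      continuous_const.mul (Real.continuous_rpow_const (hlam0 n))
  have hFc : Continuous (fun t => (∑ n ∈ s, d n * g n t) * (∑ n ∈ s, g n t) ^ (p-1)) := by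
    apply Continuous.mul
    · exact continuous_finset_sum _ fun n _ => continuous_const.mul (hgc n)
    · exact (Real.continuous_rpow_const hq0.le).comp (continuous_finset_sum _ fun n _ => hgc n)
  have hIle : (∫ t in Icc (0:ℝ) 1, |∑ n ∈ s, b n * t ^ lam n| ^ p)
      ≤ ∫ t in Icc (0:ℝ) 1, (∑ n ∈ s, d n * g n t) * (∑ n ∈ s, g n t) ^ (p-1) :=
    MeasureTheory.setIntegral_mono_on hfc.integrableOn_Icc hFc.integrableOn_Icc
      measurableSet_Icc holder
  have hexp : (∫ t in Icc (0:ℝ) 1, (∑ n ∈ s, d n * g n t) * (∑ n ∈ s, g n t) ^ (p-1))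
      = ∑ n ∈ s, d n * R n := by
    have e0 : ∀ t : ℝ, (∑ n ∈ s, d n * g n t) * (∑ m ∈ s, g m t) ^ (p-1)
        = ∑ n ∈ s, d n * (g n t * (∑ m ∈ s, g m t) ^ (p-1)) := by
      intro t
      rw [Finset.sum_mul]
      exact Finset.sum_congr rfl fun n _ => by ring
    simp only [e0]
    rw [MeasureTheory.integral_finset_sum]
    · exact Finset.sum_congr rfl fun n _ => MeasureTheory.integral_const_mul _ _
    · intro n _
      apply Continuous.integrableOn_Icc
      exact continuous_const.mul ((hgc n).mul
        ((Real.continuous_rpow_const hq0.le).comp (continuous_finset_sum _ fun m _ => hgc m)))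
  have hsum_le : ∑ n ∈ s, d n * R n ≤ C ^ (p-1) * ∑ n ∈ s, d n := by
    rw [Finset.mul_sum]
    apply Finset.sum_le_sum
    intro n hn
    calc d n * R n ≤ d n * C ^ (p-1) := mul_le_mul_of_nonneg_left (hRbound n hn) (hd0 n)
      _ = C ^ (p-1) * d n := by ring
  have hI0 : 0 ≤ ∫ t in Icc (0:ℝ) 1, |∑ n ∈ s, b n * t ^ lam n| ^ p :=
    MeasureTheory.setIntegral_nonneg measurableSet_Icc fun t _ =>
      Real.rpow_nonneg (abs_nonneg _) p
  have hd_sum0 : 0 ≤ ∑ n ∈ s, d n := Finset.sum_nonneg fun n _ => hd0 n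
  have hcomb : (∫ t in Icc (0:ℝ) 1, |∑ n ∈ s, b n * t ^ lam n| ^ p)
      ≤ C ^ (p-1) * ∑ n ∈ s, d n := by
    rw [hexp] at hIle
    linarith
  have hsplitpow : (C ^ (p-1) * ∑ n ∈ s, d n) ^ (1/p)
      = C ^ (1/p') * (∑ n ∈ s, d n) ^ (1/p) := by
    rw [Real.mul_rpow (Real.rpow_nonneg hC0.le _) hd_sum0, ← Real.rpow_mul hC0.le]
    congr 2
    rw [hp', one_div_div]
    ring
  have hdsum : ∑ n ∈ s, d n = ∑ n ∈ s, |b n| ^ p / (p * lam n + 1) := rfl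
  calc (∫ t in Icc (0:ℝ) 1, |∑ n ∈ s, b n * t ^ lam n| ^ p) ^ (1/p)
      ≤ (C ^ (p-1) * ∑ n ∈ s, d n) ^ (1/p) :=
        Real.rpow_le_rpow hI0 hcomb (by positivity)
    _ = C ^ (1/p') * (∑ n ∈ s, d n) ^ (1/p) := hsplitpow
    _ = C ^ (1/p') * (∑ n ∈ s, |b n| ^ p / (p * lam n + 1)) ^ (1/p) := by rw [hdsum]
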